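/- For every p ∈ [1,∞] there is a constant C > 0 depending only on p and on w₋, w₊ (in particular independent of σ and t) such that for all σ > 0 and all t ≥ 0 the characteristic solution w of the Burgers equation with initial data w_σ satisfies ‖∂ₓw(t,·)‖_{L^p(ℝ)} ≤ C (σ + t)^{−1 + 1/p} and ‖∂ₜw(t,·)‖_{L^p(ℝ)} ≤ C (σ + t)^{−1 + 1/p}. -/

import Mathlib

open Set MeasureTheory
open scoped ENNReal

/-- The smoothed Riemann data `w_σ`. -/
noncomputable def smoothedRiemannData (wm wp σ x : ℝ) : ℝ :=
  (wp + wm) / 2 + (wp - wm) / 2 * Real.tanh (x / σ)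

namespace BurgersAux

open Real Filter Asymptotics
open scoped Topology

lemma hasDerivAt_tanh' (x : ℝ) :
    HasDerivAt Real.tanh (1 - Real.tanh x ^ 2) x := by
  have h : HasDerivAt (fun y => Real.sinh y / Real.cosh y)
      ((Real.cosh x * Real.cosh x - Real.sinh x * Real.sinh x) / Real.cosh x ^ 2) x :=
    (Real.hasDerivAt_sinh x).div (Real.hasDerivAt_cosh x) (Real.cosh_pos x).ne'
  have he : Real.tanh = fun y => Real.sinh y / Real.cosh y := by
    funext y; exact Real.tanh_eq_sinh_div_cosh y
  rw [he]
  convert h using 1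
  have hc := (Real.cosh_pos x).ne'
  simp only []
  field_simp

lemma continuous_tanh' : Continuous Real.tanh := by
  have : Real.tanh = fun y => Real.sinh y / Real.cosh y := by
    funext y; exact Real.tanh_eq_sinh_div_cosh y
  rw [this]
  exact Real.continuous_sinh.div Real.continuous_cosh fun y => (Real.cosh_pos y).ne'

lemma tanh_sq_lt_one' (x : ℝ) : Real.tanh x ^ 2 < 1 := by
  have hc := Real.cosh_pos x
  have h1 := Real.one_le_cosh x
  have hs : Real.sinh x ^ 2 = Real.cosh x ^ 2 - 1 := by
    have := Real.cosh_sq_sub_sinh_sq x; linarith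
  rw [Real.tanh_eq_sinh_div_cosh, div_pow, div_lt_one (by positivity), hs]
  nlinarith

/-- the derivative of the data -/
noncomputable def aF (wm wp σ y : ℝ) : ℝ :=
  (wp - wm) / 2 * ((1 - Real.tanh (y / σ) ^ 2) / σ)

section core
variable {wm wp σ : ℝ}

lemma hasDerivAt_W (y : ℝ) (hσ : 0 < σ) :
    HasDerivAt (smoothedRiemannData wm wp σ) (aF wm wp σ y) y := by
  have h1 : HasDerivAt (fun y : ℝ => y / σ) (1 / σ) y := (hasDerivAt_id y).div_const σ |>.congr_deriv rfl
  have h2 := (hasDerivAt_tanh' (y / σ)).comp y h1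
  unfold smoothedRiemannData aF
  have := ((h2.const_mul ((wp - wm) / 2)).const_add ((wp + wm) / 2))
  exact this.congr_deriv (by ring)

lemma aF_pos (hw : wm < wp) (hσ : 0 < σ) (y : ℝ) : 0 < aF wm wp σ y := by
  have := tanh_sq_lt_one' (y / σ)
  have h2 : (0:ℝ) < 1 - Real.tanh (y / σ) ^ 2 := by linarith
  have h3 : (0:ℝ) < wp - wm := by linarith
  unfold aF; positivity

lemma aF_le (hw : wm < wp) (hσ : 0 < σ) (y : ℝ) :
    aF wm wp σ y ≤ (wp - wm) / (2 * σ) := by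
  have h : (0:ℝ) ≤ Real.tanh (y / σ) ^ 2 := sq_nonneg _
  unfold aF
  have h3 : (0:ℝ) ≤ wp - wm := by linarith
  have key : (wp - wm) / 2 * ((1 - Real.tanh (y / σ) ^ 2) / σ)
      = (wp - wm) * (1 - Real.tanh (y / σ) ^ 2) / (2 * σ) := by ring
  have key2 : (wp - wm) / (2 * σ) = (wp - wm) * 1 / (2 * σ) := by ring
  rw [key, key2]
  gcongr
  linarith

lemma W_mem (hw : wm < wp) (y : ℝ) : smoothedRiemannData wm wp σ y ∈ Set.Ioo wm wp := by
  have h1 : Real.tanh (y / σ) ^ 2 < 1 := tanh_sq_lt_one' _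
  have h2 : -1 < Real.tanh (y / σ) ∧ Real.tanh (y / σ) < 1 :=
    abs_lt.mp (by nlinarith [abs_nonneg (Real.tanh (y/σ)), sq_abs (Real.tanh (y/σ))])
  unfold smoothedRiemannData
  constructor <;> nlinarith [h2.1, h2.2, hw]

lemma continuous_W : Continuous (smoothedRiemannData wm wp σ) := by
  unfold smoothedRiemannData
  exact continuous_const.add
    (continuous_const.mul (continuous_tanh'.comp (continuous_id.div_const σ)))

lemma continuous_aF : Continuous (aF wm wp σ) := by
  unfold aF
  exact continuous_const.mul
    (((continuous_const.sub ((continuous_tanh'.comp (continuous_id.div_const σ)).pow 2)).div_const σ))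

lemma W_mono (hw : wm < wp) (hσ : 0 < σ) : Monotone (smoothedRiemannData wm wp σ) := by
  apply StrictMono.monotone
  apply strictMono_of_deriv_pos
  intro y
  rw [(hasDerivAt_W y hσ).deriv]
  exact aF_pos hw hσ y

lemma hasDerivAt_Phi (hσ : 0 < σ) {t : ℝ} (y : ℝ) :
    HasDerivAt (fun y => y + t * smoothedRiemannData wm wp σ y) (1 + t * aF wm wp σ y) y :=
  (hasDerivAt_id y).add (((hasDerivAt_W y hσ).const_mul t))

lemma denom_pos (hw : wm < wp) (hσ : 0 < σ) {t : ℝ} (ht : 0 ≤ t) (y : ℝ) :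
    0 < 1 + t * aF wm wp σ y := by
  have := aF_pos hw hσ y
  nlinarith

lemma Phi_strictMono (hw : wm < wp) (hσ : 0 < σ) {t : ℝ} (ht : 0 ≤ t) :
    StrictMono (fun y => y + t * smoothedRiemannData wm wp σ y) := by
  apply strictMono_of_deriv_pos
  intro y
  rw [(hasDerivAt_Phi hσ y).deriv]
  exact denom_pos hw hσ ht y

lemma Phi_surj (hw : wm < wp) (hσ : 0 < σ) {t : ℝ} (ht : 0 ≤ t) :
    Function.Surjective (fun y => y + t * smoothedRiemannData wm wp σ y) := by
  apply Continuous.surjective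
  · exact continuous_id.add (continuous_const.mul continuous_W)
  · apply tendsto_atTop_mono (fun y => ?_) (tendsto_atTop_add_const_right _ (t * wm) tendsto_id)
    have := (W_mem (σ := σ) hw y).1
    simp only [id]
    nlinarith
  · apply tendsto_atBot_mono (fun y => ?_) (tendsto_atBot_add_const_right _ (t * wp) tendsto_id)
    have := (W_mem (σ := σ) hw y).2
    simp only [id]
    nlinarith

noncomputable def gInv (wm wp σ t : ℝ) (hw : wm < wp) (hσ : 0 < σ) (ht : 0 ≤ t) : ℝ ≃o ℝ :=
  (StrictMono.orderIsoOfSurjective _ (Phi_strictMono hw hσ ht) (Phi_surj hw hσ ht)).symm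

variable (hw : wm < wp) (hσ : 0 < σ) {t : ℝ} (ht : 0 ≤ t)

lemma gInv_spec (x : ℝ) :
    gInv wm wp σ t hw hσ ht x + t * smoothedRiemannData wm wp σ (gInv wm wp σ t hw hσ ht x) = x :=
  (StrictMono.orderIsoOfSurjective _ (Phi_strictMono hw hσ ht) (Phi_surj hw hσ ht)).apply_symm_apply x

lemma gInv_cont : Continuous (gInv wm wp σ t hw hσ ht) :=
  OrderIso.continuous _

lemma hasDerivAt_gInv (x : ℝ) :
    HasDerivAt (gInv wm wp σ t hw hσ ht)
      (1 + t * aF wm wp σ (gInv wm wp σ t hw hσ ht x))⁻¹ x := by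
  apply HasDerivAt.of_local_left_inverse ((gInv_cont hw hσ ht).continuousAt)
    (hasDerivAt_Phi hσ _) (denom_pos hw hσ ht _).ne'
  filter_upwards with y using gInv_spec hw hσ ht y

/-- the spatial derivative -/
noncomputable def fD (wm wp σ t : ℝ) (hw : wm < wp) (hσ : 0 < σ) (ht : 0 ≤ t) (x : ℝ) : ℝ :=
  aF wm wp σ (gInv wm wp σ t hw hσ ht x) * (1 + t * aF wm wp σ (gInv wm wp σ t hw hσ ht x))⁻¹

lemma w_eq (w : ℝ → ℝ → ℝ)
    (hchar : ∀ t : ℝ, 0 ≤ t → ∀ y : ℝ,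
      w t (y + t * smoothedRiemannData wm wp σ y) = smoothedRiemannData wm wp σ y) (x : ℝ) :
    w t x = smoothedRiemannData wm wp σ (gInv wm wp σ t hw hσ ht x) := by
  conv_lhs => rw [← gInv_spec hw hσ ht x]
  exact hchar t ht _

lemma hasDerivAt_WgInv (x : ℝ) :
    HasDerivAt (fun x' => smoothedRiemannData wm wp σ (gInv wm wp σ t hw hσ ht x'))
      (fD wm wp σ t hw hσ ht x) x :=
  (hasDerivAt_W _ hσ).comp x (hasDerivAt_gInv hw hσ ht x)

lemma hasDerivAt_wt (w : ℝ → ℝ → ℝ)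
    (hchar : ∀ t : ℝ, 0 ≤ t → ∀ y : ℝ,
      w t (y + t * smoothedRiemannData wm wp σ y) = smoothedRiemannData wm wp σ y) (x : ℝ) :
    HasDerivAt (fun x' => w t x') (fD wm wp σ t hw hσ ht x) x := by
  have he : (fun x' => w t x')
      = fun x' => smoothedRiemannData wm wp σ (gInv wm wp σ t hw hσ ht x') := by
    funext x'; exact w_eq hw hσ ht w hchar x'
  rw [he]
  exact hasDerivAt_WgInv hw hσ ht x

lemma deriv_wt_eq (w : ℝ → ℝ → ℝ)
    (hchar : ∀ t : ℝ, 0 ≤ t → ∀ y : ℝ,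
      w t (y + t * smoothedRiemannData wm wp σ y) = smoothedRiemannData wm wp σ y) (x : ℝ) :
    deriv (fun x' => w t x') x = fD wm wp σ t hw hσ ht x :=
  (hasDerivAt_wt hw hσ ht w hchar x).deriv

lemma fD_pos (x : ℝ) : 0 < fD wm wp σ t hw hσ ht x :=
  mul_pos (aF_pos hw hσ _) (inv_pos.mpr (denom_pos hw hσ ht _))

lemma fD_le (x : ℝ) : fD wm wp σ t hw hσ ht x ≤ (wp - wm) / (2 * σ + t * (wp - wm)) := by
  set y := gInv wm wp σ t hw hσ ht x
  set a := aF wm wp σ y with ha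
  have h1 : 0 < a := aF_pos hw hσ y
  have h2 : a ≤ (wp - wm) / (2 * σ) := aF_le hw hσ y
  have hA : 0 < (wp - wm) / (2 * σ) := by
    have : (0:ℝ) < wp - wm := by linarith
    positivity
  set A := (wp - wm) / (2 * σ) with hAdef
  have hD : 0 < 1 + t * a := denom_pos hw hσ ht y
  have hDA : 0 < 1 + t * A := by nlinarith
  have key : a * (1 + t * a)⁻¹ ≤ A * (1 + t * A)⁻¹ := by
    rw [← div_eq_mul_inv, ← div_eq_mul_inv, div_le_div_iff₀ hD hDA]
    nlinarith
  have heq : A * (1 + t * A)⁻¹ = (wp - wm) / (2 * σ + t * (wp - wm)) := by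
    have hσ' : (2:ℝ) * σ ≠ 0 := by positivity
    have hden : 2 * σ + t * (wp - wm) ≠ 0 := by
      have : (0:ℝ) < wp - wm := by linarith
      positivity
    rw [hAdef, ← div_eq_mul_inv]
    field_simp
  show a * (1 + t * a)⁻¹ ≤ _
  rw [← heq]; exact key

lemma fD_cont : Continuous (fD wm wp σ t hw hσ ht) := by
  unfold fD
  have h := (continuous_aF (wm := wm) (wp := wp) (σ := σ)).comp (gInv_cont hw hσ ht)
  exact h.mul ((continuous_const.add (continuous_const.mul h)).inv₀
    fun x => (denom_pos hw hσ ht _).ne')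

/-- time-slice of the characteristic foliation -/
noncomputable def psi (wm wp σ : ℝ) (hw : wm < wp) (hσ : 0 < σ) (x₀ : ℝ) (t : ℝ) : ℝ :=
  if ht : 0 ≤ t then gInv wm wp σ t hw hσ ht x₀ else 0

lemma psi_spec (x₀ : ℝ) {t : ℝ} (ht : 0 ≤ t) :
    psi wm wp σ hw hσ x₀ t + t * smoothedRiemannData wm wp σ (psi wm wp σ hw hσ x₀ t) = x₀ := by
  unfold psi
  rw [dif_pos ht]
  exact gInv_spec hw hσ ht x₀

lemma hasDerivWithinAt_psi (x₀ : ℝ) {t₀ : ℝ} (ht₀ : 0 ≤ t₀) :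
    HasDerivWithinAt (psi wm wp σ hw hσ x₀)
      (-(smoothedRiemannData wm wp σ (psi wm wp σ hw hσ x₀ t₀))
        / (1 + t₀ * aF wm wp σ (psi wm wp σ hw hσ x₀ t₀)))
      (Ici 0) t₀ := by
  set ψ := psi wm wp σ hw hσ x₀ with hψ
  set W := smoothedRiemannData wm wp σ with hWdef
  set u₀ := ψ t₀ with hu₀
  set a₀ := aF wm wp σ u₀ with ha₀
  set D := 1 + t₀ * a₀ with hD
  have hDpos : 0 < D := denom_pos hw hσ ht₀ u₀
  set v := -(W u₀) / D with hv
  set l := 𝓝[Ici (0:ℝ)] t₀ with hl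
  have hmem : ∀ᶠ t in l, t ∈ Ici (0:ℝ) := eventually_mem_nhdsWithin
  have hK : ∀ t ∈ Ici (0:ℝ), (ψ t - u₀) + t * (W (ψ t) - W u₀) = -(t - t₀) * W u₀ := by
    intro t ht
    have h1 := psi_spec hw hσ x₀ ht
    have h2 := psi_spec hw hσ x₀ ht₀
    rw [← hψ, ← hWdef] at h1 h2
    rw [← hu₀] at h2
    nlinarith [h1, h2]
  have hstar : ∀ t ∈ Ici (0:ℝ), |ψ t - u₀| ≤ |W u₀| * |t - t₀| := by
    intro t ht
    have hKt := hK t ht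
    have hsign : 0 ≤ (ψ t - u₀) * (t * (W (ψ t) - W u₀)) := by
      rcases le_total u₀ (ψ t) with h | h
      · have hm := W_mono hw hσ h
        have ht' : (0:ℝ) ≤ t := ht
        exact mul_nonneg (by linarith) (mul_nonneg ht' (by linarith))
      · have hm := W_mono hw hσ h
        have ht' : (0:ℝ) ≤ t := ht
        have hx : ψ t - u₀ ≤ 0 := by linarith
        have hy : t * (W (ψ t) - W u₀) ≤ 0 := mul_nonpos_iff.mpr (Or.inl ⟨ht', by linarith⟩)
        nlinarith
    have habs : |ψ t - u₀| ≤ |(ψ t - u₀) + t * (W (ψ t) - W u₀)| := by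
      rcases abs_cases (ψ t - u₀) with ⟨h1, h2⟩ | ⟨h1, h2⟩ <;>
        rcases abs_cases ((ψ t - u₀) + t * (W (ψ t) - W u₀)) with ⟨h3, h4⟩ | ⟨h3, h4⟩ <;>
        nlinarith
    calc |ψ t - u₀| ≤ |(ψ t - u₀) + t * (W (ψ t) - W u₀)| := habs
      _ = |(-(t - t₀)) * W u₀| := by rw [hKt]
      _ = |W u₀| * |t - t₀| := by rw [abs_mul, abs_neg, mul_comm]
  have hbigO : (fun t => ψ t - u₀) =O[l] (fun t => t - t₀) := by
    refine isBigO_iff.mpr ⟨|W u₀|, ?_⟩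
    filter_upwards [hmem] with t ht
    simpa [Real.norm_eq_abs] using hstar t ht
  have hsub : Tendsto (fun t => t - t₀) l (𝓝 0) := by
    have : Tendsto (fun t : ℝ => t - t₀) (𝓝 t₀) (𝓝 (t₀ - t₀)) :=
      (continuous_id.sub continuous_const).tendsto t₀
    rw [sub_self] at this
    exact this.mono_left nhdsWithin_le_nhds
  have htends : Tendsto ψ l (𝓝 u₀) := by
    have h0 : Tendsto (fun t => ψ t - u₀) l (𝓝 0) := hbigO.trans_tendsto hsub
    have := h0.add (tendsto_const_nhds (x := u₀) (f := l))
    simpa using this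
  have hE : (fun z => W z - W u₀ - (z - u₀) * a₀) =o[𝓝 u₀] (fun z => z - u₀) := by
    have := (hasDerivAt_W (wm := wm) (wp := wp) u₀ hσ)
    rw [hasDerivAt_iff_isLittleO] at this
    simpa [smul_eq_mul, mul_comm, ← hWdef, ← ha₀] using this
  have hEψ : (fun t => W (ψ t) - W u₀ - (ψ t - u₀) * a₀) =o[l] (fun t => t - t₀) :=
    (hE.comp_tendsto htends).trans_isBigO hbigO
  have hTbd : (fun t : ℝ => -t) =O[l] (fun _ => (1:ℝ)) :=
    (((continuous_neg.tendsto t₀).mono_left nhdsWithin_le_nhds)).isBigO_one ℝ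
  have h1 : (fun t => -t * (W (ψ t) - W u₀ - (ψ t - u₀) * a₀)) =o[l] (fun t => t - t₀) := by
    have := hTbd.mul_isLittleO hEψ
    simpa using this
  have h2 : (fun t => -((t - t₀) * (a₀ * (ψ t - u₀)))) =o[l] (fun t => t - t₀) := by
    have ho : (fun t : ℝ => t - t₀) =o[l] (fun _ => (1:ℝ)) := by
      rw [isLittleO_one_iff]; exact hsub
    have := ho.mul_isBigO (hbigO.const_mul_left a₀)
    simpa using this.neg_left
  have hsum := ((h1.add h2).const_mul_left (1/D))
  have hcongr : ∀ᶠ t in l,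
      (1/D) * (-t * (W (ψ t) - W u₀ - (ψ t - u₀) * a₀) + -((t - t₀) * (a₀ * (ψ t - u₀))))
        = ψ t - ψ t₀ - (t - t₀) • v := by
    filter_upwards [hmem] with t ht
    have hKt := hK t ht
    rw [smul_eq_mul, hv, ← hu₀, hD]
    have hDne : 1 + t₀ * a₀ ≠ 0 := hDpos.ne'
    field_simp
    ring_nf
    nlinarith [hKt, hDpos]
  rw [hasDerivWithinAt_iff_isLittleO]
  exact hsum.congr' (hcongr.mono fun t h => h) (EventuallyEq.refl _ _)

lemma derivWithin_wt (w : ℝ → ℝ → ℝ)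
    (hchar : ∀ t : ℝ, 0 ≤ t → ∀ y : ℝ,
      w t (y + t * smoothedRiemannData wm wp σ y) = smoothedRiemannData wm wp σ y)
    (x₀ : ℝ) {t₀ : ℝ} (ht₀ : 0 ≤ t₀) :
    derivWithin (fun s => w s x₀) (Ici 0) t₀
      = aF wm wp σ (psi wm wp σ hw hσ x₀ t₀) *
        (-(smoothedRiemannData wm wp σ (psi wm wp σ hw hσ x₀ t₀))
          / (1 + t₀ * aF wm wp σ (psi wm wp σ hw hσ x₀ t₀))) := by
  set ψ := psi wm wp σ hw hσ x₀ with hψ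
  have hcomp := (hasDerivAt_W (wm := wm) (wp := wp) (ψ t₀) hσ).comp_hasDerivWithinAt t₀
    (hasDerivWithinAt_psi hw hσ x₀ ht₀)
  have hcongr : HasDerivWithinAt (fun s => w s x₀)
      (aF wm wp σ (ψ t₀) * (-(smoothedRiemannData wm wp σ (ψ t₀)) / (1 + t₀ * aF wm wp σ (ψ t₀))))
      (Ici 0) t₀ := by
    apply hcomp.congr
    · intro s hs
      have h1 := psi_spec hw hσ x₀ (hs : (0:ℝ) ≤ s)
      conv_lhs => rw [← h1]
      exact hchar s hs _
    · have h1 := psi_spec hw hσ x₀ ht₀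
      conv_lhs => rw [← h1]
      exact hchar t₀ ht₀ _
  exact hcongr.derivWithin (uniqueDiffOn_Ici 0 t₀ ht₀)

end core

lemma lintegral_le_of_deriv {f : ℝ → ℝ} {d : ℝ} (F : ℝ → ℝ)
    (hF : ∀ x, HasDerivAt F (f x) x)
    (hf : Continuous f) (hpos : ∀ x, 0 ≤ f x) (hd : ∀ a b : ℝ, F b - F a ≤ d) :
    ∫⁻ x, ENNReal.ofReal (f x) ≤ ENNReal.ofReal d := by
  have hmeas : Measurable fun x => ENNReal.ofReal (f x) :=
    ENNReal.measurable_ofReal.comp hf.measurable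
  set G : ℕ → ℝ → ℝ≥0∞ := fun n => (Ioc (-(n:ℝ)) n).indicator (fun x => ENNReal.ofReal (f x))
    with hG
  have key : ∀ n : ℕ, ∫⁻ x in Ioc (-(n:ℝ)) n, ENNReal.ofReal (f x) ≤ ENNReal.ofReal d := by
    intro n
    have hab : (-(n:ℝ)) ≤ n := by
      have : (0:ℝ) ≤ n := Nat.cast_nonneg n
      linarith
    have hint : IntervalIntegrable f volume (-(n:ℝ)) n := hf.intervalIntegrable _ _
    have heq : ∫ x in (-(n:ℝ))..n, f x = F n - F (-(n:ℝ)) :=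
      intervalIntegral.integral_eq_sub_of_hasDerivAt (fun x _ => hF x) hint
    have h2 : ∫⁻ x in Ioc (-(n:ℝ)) n, ENNReal.ofReal (f x)
        = ENNReal.ofReal (∫ x in Ioc (-(n:ℝ)) n, f x) :=
      (MeasureTheory.ofReal_integral_eq_lintegral_ofReal hf.integrableOn_Ioc
        (ae_of_all _ hpos)).symm
    rw [h2, ← intervalIntegral.integral_of_le hab, heq]
    exact ENNReal.ofReal_le_ofReal (hd _ _)
  have hGmono : Monotone G := by
    intro n m hnm x
    apply Set.indicator_le_indicator_of_subset
    · exact Ioc_subset_Ioc (by exact_mod_cast neg_le_neg (Nat.cast_le.mpr hnm)) (Nat.cast_le.mpr hnm)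
    · intro a; exact zero_le
  have hGsup : ∀ x, ⨆ n, G n x = ENNReal.ofReal (f x) := by
    intro x
    apply le_antisymm
    · exact iSup_le fun n => Set.indicator_le_self _ _ x
    · obtain ⟨n, hn⟩ := exists_nat_gt |x|
      refine le_iSup_of_le n ?_
      rw [hG]; simp only []
      rw [Set.indicator_of_mem]
      exact ⟨by linarith [(abs_lt.mp hn).1], by linarith [(abs_lt.mp hn).2]⟩
  calc ∫⁻ x, ENNReal.ofReal (f x) = ∫⁻ x, ⨆ n, G n x := by
        congr 1; funext x; rw [hGsup x]
    _ = ⨆ n, ∫⁻ x, G n x :=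
        lintegral_iSup (fun n => hmeas.indicator measurableSet_Ioc) hGmono
    _ ≤ ENNReal.ofReal d := by
        refine iSup_le fun n => ?_
        rw [hG]; simp only []
        rw [lintegral_indicator measurableSet_Ioc]
        exact key n

lemma eLpNorm_le_interp {f : ℝ → ℝ} {B d : ℝ}
    (hpos : ∀ x, 0 ≤ f x) (hB : ∀ x, f x ≤ B) (hd0 : 0 ≤ d)
    (hL1 : ∫⁻ x, ENNReal.ofReal (f x) ≤ ENNReal.ofReal d)
    {p : ℝ≥0∞} (hp : 1 ≤ p) (hptop : p ≠ ∞) :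
    eLpNorm f p volume
      ≤ ENNReal.ofReal (B ^ (1 - (1/p).toReal) * d ^ ((1/p).toReal)) := by
  have hp0 : p ≠ 0 := by
    intro h; rw [h] at hp; exact absurd hp (by simp)
  set q := p.toReal with hq
  have hq1 : 1 ≤ q := by
    rw [hq, ← ENNReal.toReal_one]
    exact ENNReal.toReal_mono hptop hp
  have hq0 : 0 < q := lt_of_lt_of_le one_pos hq1
  have hB0 : 0 ≤ B := le_trans (hpos 0) (hB 0)
  have hinv : (1/p).toReal = 1/q := by
    rw [one_div, one_div, hq, ENNReal.toReal_inv]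
  rw [hinv]
  rw [eLpNorm_eq_lintegral_rpow_enorm_toReal hp0 hptop, ← hq]
  have henorm : ∀ x : ℝ, (‖f x‖₊ : ℝ≥0∞) = ENNReal.ofReal (f x) := fun x =>
    Real.enorm_eq_ofReal (hpos x)
  have step1 : ∫⁻ x, (‖f x‖₊ : ℝ≥0∞) ^ q ≤ ENNReal.ofReal B ^ (q - 1) * ENNReal.ofReal d := by
    have hbound : ∀ x, (‖f x‖₊ : ℝ≥0∞) ^ q ≤ ENNReal.ofReal B ^ (q - 1) * ENNReal.ofReal (f x) := by
      intro x
      rw [henorm x]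
      have hsplit : ENNReal.ofReal (f x) ^ q
          = ENNReal.ofReal (f x) ^ (q - 1) * ENNReal.ofReal (f x) ^ (1:ℝ) := by
        rw [← ENNReal.rpow_add_of_nonneg _ _ (by linarith) (by norm_num)]
        norm_num
      rw [hsplit, ENNReal.rpow_one]
      exact mul_le_mul_left (ENNReal.rpow_le_rpow (ENNReal.ofReal_le_ofReal (hB x)) (by linarith)) _
    calc ∫⁻ x, (‖f x‖₊ : ℝ≥0∞) ^ q ≤ ∫⁻ x, ENNReal.ofReal B ^ (q - 1) * ENNReal.ofReal (f x) :=
          lintegral_mono hbound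
      _ = ENNReal.ofReal B ^ (q - 1) * ∫⁻ x, ENNReal.ofReal (f x) :=
          lintegral_const_mul' _ _ (ENNReal.rpow_ne_top_of_nonneg (by linarith) ENNReal.ofReal_ne_top)
      _ ≤ ENNReal.ofReal B ^ (q - 1) * ENNReal.ofReal d := mul_le_mul_right hL1 _
  have h1q : 1/q ≤ 1 := by rw [div_le_one hq0]; exact hq1
  calc (∫⁻ x, (‖f x‖₊ : ℝ≥0∞) ^ q) ^ (1/q)
      ≤ (ENNReal.ofReal B ^ (q - 1) * ENNReal.ofReal d) ^ (1/q) :=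
        ENNReal.rpow_le_rpow step1 (by positivity)
    _ = ENNReal.ofReal B ^ ((q-1) * (1/q)) * ENNReal.ofReal d ^ (1/q) := by
        rw [ENNReal.mul_rpow_of_nonneg _ _ (by positivity), ← ENNReal.rpow_mul]
    _ = ENNReal.ofReal (B ^ (1 - 1/q)) * ENNReal.ofReal (d ^ (1/q)) := by
        rw [← ENNReal.ofReal_rpow_of_nonneg hB0 (by linarith),
          ← ENNReal.ofReal_rpow_of_nonneg hd0 (by positivity)]
        congr 1
        congr 1
        field_simp
    _ = ENNReal.ofReal (B ^ (1 - 1/q) * d ^ (1/q)) := by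
        rw [ENNReal.ofReal_mul (by positivity)]

lemma real_bound {wm wp : ℝ} (hw : wm < wp) {s θ : ℝ} (hs : 0 < s)
    (hθ0 : 0 ≤ θ) (hθ1 : θ ≤ 1) :
    (max ((wp - wm)/2) 1 / s) ^ (1 - θ) * (wp - wm) ^ θ
      ≤ (max ((wp - wm)/2) 1 * max (wp - wm) 1) * s ^ (-1 + θ) := by
  have hd : 0 < wp - wm := by linarith
  set Ci := max ((wp - wm)/2) 1 with hCi
  set md := max (wp - wm) 1 with hmd
  have hCi1 : 1 ≤ Ci := le_max_right _ _
  have hCi0 : (0:ℝ) < Ci := by linarith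
  have hmd1 : 1 ≤ md := le_max_right _ _
  have hdmd : wp - wm ≤ md := le_max_left _ _
  have hdiv : (Ci / s) ^ (1 - θ) = Ci ^ (1 - θ) / s ^ (1 - θ) :=
    Real.div_rpow hCi0.le hs.le _
  have hsneg : s ^ (-1 + θ) = (s ^ (1 - θ))⁻¹ := by
    rw [← Real.rpow_neg hs.le]
    congr 1
    ring
  have hspos : 0 < s ^ (1 - θ) := Real.rpow_pos_of_pos hs _
  rw [hdiv, hsneg]
  have hnum : Ci ^ (1 - θ) * (wp - wm) ^ θ ≤ Ci * md := by
    have h1 : Ci ^ (1 - θ) ≤ Ci := by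
      calc Ci ^ (1 - θ) ≤ Ci ^ (1:ℝ) :=
            Real.rpow_le_rpow_of_exponent_le hCi1 (by linarith)
        _ = Ci := Real.rpow_one Ci
    have h2 : (wp - wm) ^ θ ≤ md := by
      calc (wp - wm) ^ θ ≤ md ^ θ := Real.rpow_le_rpow hd.le hdmd hθ0
        _ ≤ md ^ (1:ℝ) := Real.rpow_le_rpow_of_exponent_le hmd1 hθ1
        _ = md := Real.rpow_one md
    have hp1 : 0 ≤ Ci ^ (1 - θ) := (Real.rpow_pos_of_pos hCi0 _).le
    have hp2 : 0 ≤ (wp - wm) ^ θ := (Real.rpow_pos_of_pos hd _).le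
    exact mul_le_mul h1 h2 hp2 hCi0.le
  calc Ci ^ (1 - θ) / s ^ (1 - θ) * (wp - wm) ^ θ
      = (Ci ^ (1 - θ) * (wp - wm) ^ θ) / s ^ (1 - θ) := by ring
    _ ≤ (Ci * md) / s ^ (1 - θ) := by gcongr
    _ = Ci * md * (s ^ (1 - θ))⁻¹ := by ring

end BurgersAux

open BurgersAux in
theorem burgers_characteristic_solution_first_derivative_Lp_bound
    (wm wp : ℝ) (hw : wm < wp) (p : ℝ≥0∞) (hp : 1 ≤ p) :
    ∃ C : ℝ, 0 < C ∧ ∀ σ : ℝ, 0 < σ → ∀ w : ℝ → ℝ → ℝ,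
      -- `w` is the characteristic solution of Burgers' equation with data `w_σ`:
      -- it satisfies `w(t, y + t w_σ(y)) = w_σ(y)` for `t ≥ 0`
      (∀ t : ℝ, 0 ≤ t → ∀ y : ℝ,
        w t (y + t * smoothedRiemannData wm wp σ y) = smoothedRiemannData wm wp σ y) →
      ∀ t : ℝ, 0 ≤ t →
        eLpNorm (fun x => deriv (fun x' => w t x') x) p volume
          ≤ ENNReal.ofReal (C * (σ + t) ^ (-1 + (1 / p).toReal)) ∧
        eLpNorm (fun x => derivWithin (fun s => w s x) (Set.Ici 0) t) p volume
          ≤ ENNReal.ofReal (C * (σ + t) ^ (-1 + (1 / p).toReal)) := by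
  classical
  set M := max |wm| |wp| with hM
  have hM0 : 0 ≤ M := le_trans (abs_nonneg wm) (le_max_left _ _)
  set Ci := max ((wp - wm)/2) 1 with hCi
  set md := max (wp - wm) 1 with hmd
  have hCi1 : 1 ≤ Ci := le_max_right _ _
  have hmd1 : 1 ≤ md := le_max_right _ _
  have hd : (0:ℝ) < wp - wm := by linarith
  have hCd2 : (wp - wm)/2 ≤ Ci := le_max_left _ _
  refine ⟨(1 + M) * (Ci * md), by positivity, ?_⟩
  intro σ hσ w hchar t ht
  have hs : 0 < σ + t := by linarith
  have hCi0 : (0:ℝ) < Ci := lt_of_lt_of_le one_pos hCi1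
  have hmd0 : (0:ℝ) < md := lt_of_lt_of_le one_pos hmd1
  have hCimd : Ci * md ≤ (1 + M) * (Ci * md) := by
    nlinarith [mul_nonneg hM0 (mul_pos hCi0 hmd0).le]
  have hCile : Ci ≤ Ci * md := by
    nlinarith [mul_nonneg hCi0.le (sub_nonneg.mpr hmd1)]
  set θ := (1/p).toReal with hθ
  have hθ0 : 0 ≤ θ := ENNReal.toReal_nonneg
  have hθ1 : θ ≤ 1 := by
    have h1 : (1/p) ≤ 1 := by
      rw [one_div]
      exact ENNReal.inv_le_one.mpr hp
    calc θ ≤ (1:ℝ≥0∞).toReal := ENNReal.toReal_mono (by simp) h1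
      _ = 1 := by simp
  set B := Ci / (σ + t) with hB
  have hB0 : 0 < B := by positivity
  -- pointwise bound on fD
  have hfB : ∀ x, fD wm wp σ t hw hσ ht x ≤ B := by
    intro x
    refine (fD_le hw hσ ht x).trans ?_
    rw [hB, div_le_div_iff₀ (by nlinarith) hs]
    have e1 : (wp - wm) * σ ≤ Ci * (2 * σ) := by nlinarith
    have e2 : (wp - wm) * t ≤ Ci * (t * (wp - wm)) := by
      nlinarith [mul_nonneg ht hd.le, mul_nonneg (mul_nonneg ht hd.le) (sub_nonneg.mpr hCi1)]
    nlinarith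
  have hfpos : ∀ x, 0 ≤ fD wm wp σ t hw hσ ht x := fun x => (fD_pos hw hσ ht x).le
  -- W bounds
  have hWabs : ∀ y, |smoothedRiemannData wm wp σ y| ≤ M := by
    intro y
    obtain ⟨h1, h2⟩ := W_mem (σ := σ) hw y
    rw [abs_le]
    constructor
    · have : -M ≤ -|wm| := by
        simp only [neg_le_neg_iff]
        exact le_max_left _ _
      have h3 : -|wm| ≤ wm := neg_abs_le wm
      linarith
    · have : |wp| ≤ M := le_max_right _ _
      have h3 : wp ≤ |wp| := le_abs_self wp
      linarith
  -- L1 bound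
  have hL1 : ∫⁻ x, ENNReal.ofReal (fD wm wp σ t hw hσ ht x) ≤ ENNReal.ofReal (wp - wm) := by
    apply lintegral_le_of_deriv (F := fun x => smoothedRiemannData wm wp σ (gInv wm wp σ t hw hσ ht x))
      (fun x => hasDerivAt_WgInv hw hσ ht x) (fD_cont hw hσ ht) hfpos
    intro a b
    obtain ⟨h1, _⟩ := W_mem (σ := σ) hw (gInv wm wp σ t hw hσ ht a)
    obtain ⟨_, h2⟩ := W_mem (σ := σ) hw (gInv wm wp σ t hw hσ ht b)
    linarith
  -- rewrite space function
  have hfun1 : (fun x => deriv (fun x' => w t x') x) = fD wm wp σ t hw hσ ht :=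
    funext fun x => deriv_wt_eq hw hσ ht w hchar x
  -- rewrite time function
  have hpsi : ∀ x, psi wm wp σ hw hσ x t = gInv wm wp σ t hw hσ ht x := fun x => dif_pos ht
  have hfun2 : (fun x => derivWithin (fun s => w s x) (Set.Ici 0) t)
      = fun x => -(smoothedRiemannData wm wp σ (gInv wm wp σ t hw hσ ht x))
          * fD wm wp σ t hw hσ ht x := by
    funext x
    rw [derivWithin_wt hw hσ w hchar x ht, hpsi x]
    unfold fD
    field_simp
  -- time-function domination
  have htime_bd : ∀ x, ‖-(smoothedRiemannData wm wp σ (gInv wm wp σ t hw hσ ht x))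
      * fD wm wp σ t hw hσ ht x‖ ≤ ‖(1 + M) * fD wm wp σ t hw hσ ht x‖ := by
    intro x
    rw [Real.norm_eq_abs, Real.norm_eq_abs, abs_mul, abs_mul, abs_neg]
    apply mul_le_mul_of_nonneg_right _ (abs_nonneg _)
    calc |smoothedRiemannData wm wp σ (gInv wm wp σ t hw hσ ht x)| ≤ M := hWabs _
      _ ≤ |1 + M| := by rw [abs_of_nonneg (by linarith)]; linarith
  have htime_mono : eLpNorm (fun x => derivWithin (fun s => w s x) (Set.Ici 0) t) p volume
      ≤ eLpNorm (fun x => (1 + M) * fD wm wp σ t hw hσ ht x) p volume := by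
    rw [hfun2]
    exact eLpNorm_mono htime_bd
  -- the dominating function data
  have hgpos : ∀ x, 0 ≤ (1 + M) * fD wm wp σ t hw hσ ht x :=
    fun x => mul_nonneg (by linarith) (hfpos x)
  have hgB : ∀ x, (1 + M) * fD wm wp σ t hw hσ ht x ≤ (1 + M) * B :=
    fun x => mul_le_mul_of_nonneg_left (hfB x) (by linarith)
  have hgL1 : ∫⁻ x, ENNReal.ofReal ((1 + M) * fD wm wp σ t hw hσ ht x)
      ≤ ENNReal.ofReal ((1 + M) * (wp - wm)) := by
    apply lintegral_le_of_deriv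
      (F := fun x => (1 + M) * smoothedRiemannData wm wp σ (gInv wm wp σ t hw hσ ht x))
      (fun x => (hasDerivAt_WgInv hw hσ ht x).const_mul (1 + M))
      (continuous_const.mul (fD_cont hw hσ ht)) hgpos
    intro a b
    obtain ⟨h1, _⟩ := W_mem (σ := σ) hw (gInv wm wp σ t hw hσ ht a)
    obtain ⟨_, h2⟩ := W_mem (σ := σ) hw (gInv wm wp σ t hw hσ ht b)
    nlinarith
  rcases eq_or_ne p ∞ with hptop | hptop
  · -- p = ∞
    have hθtop : θ = 0 := by rw [hθ, hptop]; simp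
    have hrw : (σ + t) ^ (-1 + θ) = (σ + t)⁻¹ := by
      rw [hθtop, add_zero, Real.rpow_neg_one]
    constructor
    · rw [hfun1, hptop, eLpNorm_exponent_top]
      refine (eLpNormEssSup_le_of_ae_bound (C := B) (ae_of_all _ fun x => ?_)).trans ?_
      · rw [Real.norm_eq_abs, abs_of_nonneg (hfpos x)]
        exact hfB x
      · apply ENNReal.ofReal_le_ofReal
        rw [hrw, hB]
        rw [div_eq_mul_inv]
        apply mul_le_mul_of_nonneg_right _ (by positivity)
        exact hCile.trans hCimd
    · rw [hptop, eLpNorm_exponent_top] at htime_mono ⊢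
      refine le_trans htime_mono ?_
      refine (eLpNormEssSup_le_of_ae_bound (C := (1 + M) * B) (ae_of_all _ fun x => ?_)).trans ?_
      · rw [Real.norm_eq_abs, abs_of_nonneg (hgpos x)]
        exact hgB x
      · apply ENNReal.ofReal_le_ofReal
        rw [hrw, hB]
        rw [div_eq_mul_inv, ← mul_assoc]
        apply mul_le_mul_of_nonneg_right _ (by positivity)
        exact mul_le_mul_of_nonneg_left hCile (by linarith)
  · -- p finite
    have hkey : B ^ (1 - θ) * (wp - wm) ^ θ ≤ Ci * md * (σ + t) ^ (-1 + θ) := by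
      rw [hB]
      exact real_bound hw hs hθ0 hθ1
    have hpow : (0:ℝ) ≤ (σ + t) ^ (-1 + θ) := (Real.rpow_pos_of_pos hs _).le
    constructor
    · rw [hfun1]
      refine (eLpNorm_le_interp hfpos hfB hd.le hL1 hp hptop).trans ?_
      apply ENNReal.ofReal_le_ofReal
      rw [← hθ]
      calc B ^ (1 - θ) * (wp - wm) ^ θ ≤ Ci * md * (σ + t) ^ (-1 + θ) := hkey
        _ ≤ (1 + M) * (Ci * md) * (σ + t) ^ (-1 + θ) :=
            mul_le_mul_of_nonneg_right hCimd hpow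
    · refine htime_mono.trans ?_
      refine (eLpNorm_le_interp hgpos hgB (by nlinarith) hgL1 hp hptop).trans ?_
      apply ENNReal.ofReal_le_ofReal
      rw [← hθ]
      have hexp : ((1 + M) * B) ^ (1 - θ) * ((1 + M) * (wp - wm)) ^ θ
          = (1 + M) * (B ^ (1 - θ) * (wp - wm) ^ θ) := by
        rw [Real.mul_rpow (by linarith) hB0.le, Real.mul_rpow (by linarith) hd.le]
        have : (1 + M) ^ (1 - θ) * (1 + M) ^ θ = (1 + M) ^ ((1 - θ) + θ) :=
          (Real.rpow_add (by linarith) _ _).symm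
        calc (1 + M) ^ (1 - θ) * B ^ (1 - θ) * ((1 + M) ^ θ * (wp - wm) ^ θ)
            = ((1 + M) ^ (1 - θ) * (1 + M) ^ θ) * (B ^ (1 - θ) * (wp - wm) ^ θ) := by ring
          _ = (1 + M) ^ ((1 - θ) + θ) * (B ^ (1 - θ) * (wp - wm) ^ θ) := by rw [this]
          _ = (1 + M) * (B ^ (1 - θ) * (wp - wm) ^ θ) := by
              norm_num
      rw [hexp]
      calc (1 + M) * (B ^ (1 - θ) * (wp - wm) ^ θ)
          ≤ (1 + M) * (Ci * md * (σ + t) ^ (-1 + θ)) :=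
            mul_le_mul_of_nonneg_left hkey (by linarith)
        _ = (1 + M) * (Ci * md) * (σ + t) ^ (-1 + θ) := by ring
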